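/- Let 1 ≤ p < ∞, let w̃ be a continuous positive weight and X = L^p_{w̃}(ℝ). Let F : D → ℝ be a warping function whose weight w = (F⁻¹)′ belongs to C^{n−1}(ℝ), satisfies w(x+y) ≤ C·w(x)·w(y) for all x,y ∈ ℝ, and |w^{(k)}/w| ≤ D_k for constants D_k > 0, k = 0,…,n−1. Suppose θ ∈ Cⁿ(ℝ) ∩ L²_{√w}(ℝ) satisfies θ^{(n)} ∈ X and θ^{(k)}·w^l ∈ X for all 0 ≤ k ≤ n−1 and 1 ≤ l ≤ n−k. Then (E_{y,ε}θ)^{(n)} ∈ X for all y ∈ ℝ and ε ≥ 0, and sup_{y∈ℝ} ‖(θ − E_{y,ε}θ)^{(n)}‖_X → 0 as ε → 0⁺. -/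

import Mathlib

open MeasureTheory Filter Topology Set
open scoped ENNReal NNReal

noncomputable section

/-- A warping function `F : D → ℝ` (with `D = ℝ` or `D = (0,∞)`), bundled together with its
inverse `Finv`, its derivative `F'` and the associated weight `w = (F⁻¹)'`.  The fields record:
bijectivity of `F : D → ℝ`, `F ∈ C¹(D)` with `F' > 0`, strict decrease of `F'` in `|t|`,
`w = (F⁻¹)'`, oddness of `F` when `D = ℝ`, and `v`-moderateness of `w` for some
submultiplicative weight `v`. -/
structure Warping where
  D : Set ℝ
  F : ℝ → ℝ
  Finv : ℝ → ℝ
  F' : ℝ → ℝ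
  w : ℝ → ℝ
  hD : D = Set.univ ∨ D = Set.Ioi 0
  left_inv : ∀ x ∈ D, Finv (F x) = x
  mem_inv : ∀ s : ℝ, Finv s ∈ D
  right_inv : ∀ s : ℝ, F (Finv s) = s
  F_hasDeriv : ∀ t ∈ D, HasDerivAt F (F' t) t
  F'_cont : ContinuousOn F' D
  F'_pos : ∀ t ∈ D, 0 < F' t
  F'_dec : ∀ t₀ ∈ D, ∀ t₁ ∈ D, |t₀| < |t₁| → F' t₁ < F' t₀
  w_hasDeriv : ∀ s : ℝ, HasDerivAt Finv (w s) s
  w_pos : ∀ s : ℝ, 0 < w s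
  odd_of_univ : D = Set.univ → ∀ t, F (-t) = -F t
  moderate : ∃ (v : ℝ → ℝ) (C₀ : ℝ), (∀ x, 0 < v x) ∧ (∀ x y, v (x + y) ≤ v x * v y) ∧
      ∀ x y, w (x + y) ≤ C₀ * v x * w y

/-- The frequency-side warped atom `g_x = √(F'(x)) · (T_{F(x)}θ) ∘ F` on `D`, extended by zero. -/
def gxFun (W : Warping) (θ : ℝ → ℂ) (x : ℝ) : ℝ → ℂ :=
  W.D.indicator fun t => (Real.sqrt (W.F' x) : ℂ) * θ (W.F t - W.F x)

/-- The Fourier transform of the warped time-frequency atom `g_{x,ξ} = T_ξ (ǧ_x)`: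
`ĝ_{x,ξ}(t) = e^{-2πiξt} g_x(t)`. -/
def hatAtom (W : Warping) (θ : ℝ → ℂ) (x ξ : ℝ) : ℝ → ℂ := fun t =>
  gxFun W θ x t * Complex.exp (-(2 * Real.pi * Complex.I * ξ * t))

/-- The warped time-frequency transform `V_{θ,F} f (x,ξ) = ⟨f, g_{x,ξ}⟩`, expressed on the
Fourier side (via Plancherel) in terms of `fh = f̂`:
`V_{θ,F} f (x,ξ) = ∫ f̂(t) conj(g_x(t)) e^{2πiξt} dt`. -/
def warpedTransform (W : Warping) (θ fh : ℝ → ℂ) (x ξ : ℝ) : ℂ :=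
  ∫ t : ℝ, fh t * (starRingEnd ℂ) (gxFun W θ x t) * Complex.exp (2 * Real.pi * Complex.I * ξ * t)

/-- The operator `E_{y,ε}`: `(E_{y,ε}f)(t) = f(t) e^{2πiε(F⁻¹(t+y)−F⁻¹(y))/w(y)}`. -/
def Eop (W : Warping) (y ε : ℝ) (f : ℝ → ℂ) : ℝ → ℂ := fun t =>
  f t * Complex.exp (2 * Real.pi * Complex.I * ε *
    (((W.Finv (t + y) - W.Finv y) / W.w y : ℝ) : ℂ))

/-- norm of 1 - exp bound -/
lemma one_sub_exp_bound {z : ℂ} (h1 : ‖Complex.exp z‖ ≤ 1) :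
    ‖1 - Complex.exp z‖ ≤ min 2 (2 * ‖z‖) := by
  rcases le_or_gt ‖z‖ 1 with hz | hz
  · have h2 : ‖Complex.exp z - 1‖ ≤ 2 * ‖z‖ := by
      simpa using Complex.norm_exp_sub_one_le (x := z) (by simpa using hz)
    rw [← norm_neg]
    simp only [neg_sub]
    exact le_min (h2.trans (by nlinarith [norm_nonneg z])) h2
  · have h2 : ‖1 - Complex.exp z‖ ≤ 2 := by
      calc ‖1 - Complex.exp z‖ ≤ ‖(1:ℂ)‖ + ‖Complex.exp z‖ := norm_sub_le _ _
        _ ≤ 2 := by simp; linarith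
    exact le_min h2 (h2.trans (by nlinarith))

lemma norm_iteratedDeriv_one_sub {m : ℕ} (hm : m ≠ 0) (f : ℝ → ℂ) (t : ℝ) :
    ‖iteratedDeriv m (fun u => 1 - f u) t‖ = ‖iteratedDeriv m f t‖ := by
  simp_rw [← iteratedDerivWithin_univ]
  rw [iteratedDerivWithin_const_sub (Nat.pos_of_ne_zero hm) 1,
    iteratedDerivWithin_fun_neg, norm_neg]

/-- The exponential factor in `Eop`. -/
def expFun (W : Warping) (y ε : ℝ) : ℝ → ℂ := fun t =>
  Complex.exp (2 * Real.pi * Complex.I * ε *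
    (((W.Finv (t + y) - W.Finv y) / W.w y : ℝ) : ℂ))

/-- Sum of powers of the weight. -/
def Sfun (W : Warping) (m : ℕ) (t : ℝ) : ℝ := ∑ l ∈ Finset.range m, W.w t ^ (l + 1)

lemma Sfun_nonneg (W : Warping) (m : ℕ) (t : ℝ) : 0 ≤ Sfun W m t :=
  Finset.sum_nonneg fun l _ => pow_nonneg (W.w_pos t).le _

lemma Sfun_mono (W : Warping) {m m' : ℕ} (h : m ≤ m') (t : ℝ) : Sfun W m t ≤ Sfun W m' t :=
  Finset.sum_le_sum_of_subset_of_nonneg (Finset.range_subset_range.2 h)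
    (fun l _ _ => pow_nonneg (W.w_pos t).le _)

lemma Sfun_le (W : Warping) {m : ℕ} (hm : 1 ≤ m) (t : ℝ) : W.w t ≤ Sfun W m t := by
  calc W.w t = Sfun W 1 t := by simp [Sfun]
    _ ≤ Sfun W m t := Sfun_mono W hm t

lemma Sfun_mul (W : Warping) (m : ℕ) (t : ℝ) : W.w t * Sfun W m t ≤ Sfun W (m + 1) t := by
  have h1 : W.w t * Sfun W m t = ∑ l ∈ Finset.range m, W.w t ^ (l + 1 + 1) := by
    rw [Sfun, Finset.mul_sum]
    exact Finset.sum_congr rfl fun l _ => by ring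
  have h2 : Sfun W (m + 1) t = (∑ l ∈ Finset.range m, W.w t ^ (l + 1 + 1)) + W.w t ^ 1 := by
    rw [Sfun, Finset.sum_range_succ']
  rw [h1, h2]
  nlinarith [W.w_pos t]

lemma Finv_contDiff (W : Warping) (n : ℕ) (hn : 1 ≤ n)
    (hw : ContDiff ℝ (n - 1 : ℕ) W.w) : ContDiff ℝ (n : ℕ) W.Finv := by
  obtain ⟨m, rfl⟩ : ∃ m, n = m + 1 := ⟨n - 1, by omega⟩
  have hw : ContDiff ℝ (m : ℕ) W.w := by simpa using hw
  have : ((m + 1 : ℕ) : WithTop ℕ∞) = (m : WithTop ℕ∞) + 1 := by push_cast; ring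
  rw [this, contDiff_succ_iff_deriv]
  refine ⟨fun s => (W.w_hasDeriv s).differentiableAt, by simp, ?_⟩
  have hderiv : deriv W.Finv = W.w := funext fun s => (W.w_hasDeriv s).deriv
  rw [hderiv]; exact hw

lemma psi_hasDerivAt (W : Warping) (y t : ℝ) :
    HasDerivAt (fun t => (W.Finv (t + y) - W.Finv y) / W.w y) (W.w (t + y) / W.w y) t := by
  have h1 : HasDerivAt (fun t : ℝ => W.Finv (t + y)) (W.w (t + y)) t := by
    simpa [Function.comp_def] using (W.w_hasDeriv (t + y)).comp t ((hasDerivAt_id t).add_const y)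
  exact (h1.sub_const _).div_const _

lemma expFun_contDiff (W : Warping) {n : ℕ} (hFinv : ContDiff ℝ (n : ℕ) W.Finv) (y ε : ℝ) :
    ContDiff ℝ (n : ℕ) (expFun W y ε) := by
  have h1 : ContDiff ℝ (n : ℕ) fun t : ℝ => (W.Finv (t + y) - W.Finv y) / W.w y :=
    ((hFinv.comp (contDiff_id.add contDiff_const)).sub contDiff_const).div_const _
  have h2 : ContDiff ℝ (n : ℕ) fun t : ℝ =>
      2 * Real.pi * Complex.I * ε * (((W.Finv (t + y) - W.Finv y) / W.w y : ℝ) : ℂ) :=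
    contDiff_const.mul (Complex.ofRealCLM.contDiff.comp h1)
  exact h2.cexp

lemma expFun_norm (W : Warping) (y ε t : ℝ) : ‖expFun W y ε t‖ = 1 := by
  rw [expFun, Complex.norm_exp]
  have : (2 * Real.pi * Complex.I * ε *
      (((W.Finv (t + y) - W.Finv y) / W.w y : ℝ) : ℂ)).re = 0 := by
    simp [Complex.mul_re, Complex.mul_im]
  rw [this, Real.exp_zero]

lemma expFun_hasDerivAt (W : Warping) (y ε t : ℝ) :
    HasDerivAt (expFun W y ε)
      ((2 * Real.pi * Complex.I * ε * ((W.w y : ℂ))⁻¹ * (W.w (t + y) : ℂ)) * expFun W y ε t) t := by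
  have h1 : HasDerivAt
      (fun t : ℝ => 2 * Real.pi * Complex.I * ε *
        (((W.Finv (t + y) - W.Finv y) / W.w y : ℝ) : ℂ))
      (2 * Real.pi * Complex.I * ε * ((W.w (t + y) / W.w y : ℝ) : ℂ)) t :=
    ((psi_hasDerivAt W y t).ofReal_comp).const_mul _
  have h2 := h1.cexp
  refine h2.congr_deriv ?_
  simp only [expFun, Complex.ofReal_div, Complex.ofReal_mul, Complex.ofReal_inv,
    Complex.ofReal_sub]
  ring
lemma expFun_deriv_eq (W : Warping) (y ε : ℝ) :
    deriv (expFun W y ε) = fun t =>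
      (2 * Real.pi * Complex.I * ε * ((W.w y : ℂ))⁻¹ * (W.w (t + y) : ℂ)) * expFun W y ε t :=
  funext fun t => (expFun_hasDerivAt W y ε t).deriv

lemma norm_expFun_const (W : Warping) {ε : ℝ} (hε : 0 ≤ ε) (y : ℝ) :
    ‖(2 * Real.pi * Complex.I * (ε : ℂ) * ((W.w y : ℂ))⁻¹)‖ = 2 * Real.pi * ε * (W.w y)⁻¹ := by
  rw [norm_mul, norm_mul, norm_mul, norm_mul, norm_inv]
  simp only [Complex.norm_real, Complex.norm_I, Real.norm_eq_abs, Complex.norm_ofNat]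
  rw [abs_of_nonneg Real.pi_pos.le, abs_of_nonneg hε, abs_of_pos (W.w_pos y)]
  ring

lemma norm_iteratedFDeriv_wshift (W : Warping) {N : ℕ} (hw : ContDiff ℝ (N : ℕ) W.w)
    {i : ℕ} (hi : i ≤ N) (y t : ℝ) :
    ‖iteratedFDeriv ℝ i (fun t : ℝ => ((W.w (t + y) : ℝ) : ℂ)) t‖
      = |iteratedDeriv i W.w (t + y)| := by
  have hshift : ContDiff ℝ (N : ℕ) fun t : ℝ => W.w (t + y) :=
    hw.comp (contDiff_id.add contDiff_const)
  have h0 : (fun t : ℝ => ((W.w (t + y) : ℝ) : ℂ))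
      = Complex.ofRealLI ∘ fun t : ℝ => W.w (t + y) := rfl
  rw [h0, Complex.ofRealLI.norm_iteratedFDeriv_comp_left hshift.contDiffAt (by exact_mod_cast hi),
    norm_iteratedFDeriv_eq_norm_iteratedDeriv, iteratedDeriv_comp_add_const, Real.norm_eq_abs]

lemma expFun_bound (W : Warping) (n : ℕ) (hw : ContDiff ℝ (n - 1 : ℕ) W.w)
    (hFinv : ContDiff ℝ (n : ℕ) W.Finv)
    (C : ℝ) (hC : 0 < C)
    (hwsub : ∀ x y : ℝ, W.w (x + y) ≤ C * W.w x * W.w y)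
    (Dk : ℕ → ℝ) (hDkpos : ∀ k ≤ n - 1, 0 < Dk k)
    (hder : ∀ k ≤ n - 1, ∀ s : ℝ, |iteratedDeriv k W.w s| ≤ Dk k * W.w s) :
    ∃ K : ℝ, 0 ≤ K ∧ ∀ j : ℕ, 1 ≤ j → j ≤ n → ∀ ε : ℝ, 0 ≤ ε → ∀ y t : ℝ,
      ‖iteratedFDeriv ℝ j (expFun W y ε) t‖ ≤ K * (ε * (1 + ε) ^ j) * Sfun W j t := by
  suffices h : ∀ m : ℕ, m ≤ n → ∃ K : ℝ, 0 ≤ K ∧ ∀ j : ℕ, 1 ≤ j → j ≤ m → ∀ ε : ℝ, 0 ≤ ε →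
      ∀ y t : ℝ, ‖iteratedFDeriv ℝ j (expFun W y ε) t‖ ≤ K * (ε * (1 + ε) ^ j) * Sfun W j t by
    exact h n le_rfl
  intro m
  induction m with
  | zero => exact fun _ => ⟨0, le_rfl, fun j hj1 hj0 => by omega⟩
  | succ m IH =>
    intro hmn
    obtain ⟨K, hK0, hK⟩ := IH (by omega)
    set K1 : ℝ := ∑ i ∈ Finset.range (m + 1),
      (m.choose i : ℝ) * (2 * Real.pi * Dk i * C) * max K 1 with hK1def
    refine ⟨max K K1, le_trans hK0 (le_max_left _ _), ?_⟩
    intro j hj1 hjm ε hε y t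
    rcases Nat.lt_succ_iff_lt_or_eq.mp (Nat.lt_succ_of_le hjm) with hjm' | rfl
    · have hb := hK j hj1 (by omega) ε hε y t
      refine hb.trans (mul_le_mul_of_nonneg_right
        (mul_le_mul_of_nonneg_right (le_max_left _ _) (by positivity)) (Sfun_nonneg W j t))
    · -- j = m + 1
      have h1ε : (1 : ℝ) ≤ 1 + ε := by linarith
      have hwm : ContDiff ℝ (m : ℕ) W.w := by
        refine hw.of_le ?_
        exact_mod_cast (by omega : m ≤ n - 1)
      have hwshift : ContDiff ℝ (m : ℕ) fun t : ℝ => ((W.w (t + y) : ℝ) : ℂ) :=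
        Complex.ofRealCLM.contDiff.comp (hwm.comp (contDiff_id.add contDiff_const))
      have hf₁ : ContDiff ℝ (m : ℕ) fun t : ℝ =>
          2 * Real.pi * Complex.I * (ε : ℂ) * ((W.w y : ℂ))⁻¹ * (W.w (t + y) : ℂ) := by
        have := (contDiff_const (c := 2 * Real.pi * Complex.I * (ε : ℂ) * ((W.w y : ℂ))⁻¹)).mul hwshift
        simpa [mul_assoc] using this
      have hg₁ : ContDiff ℝ (m : ℕ) (expFun W y ε) :=
        (expFun_contDiff W hFinv y ε).of_le (by exact_mod_cast (by omega : m ≤ n))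
      have e1 : ‖iteratedFDeriv ℝ (m + 1) (expFun W y ε) t‖
          = ‖iteratedFDeriv ℝ m (fun t =>
              (2 * Real.pi * Complex.I * (ε : ℂ) * ((W.w y : ℂ))⁻¹ * (W.w (t + y) : ℂ))
              * expFun W y ε t) t‖ := by
        rw [norm_iteratedFDeriv_eq_norm_iteratedDeriv, iteratedDeriv_succ', expFun_deriv_eq,
          ← norm_iteratedFDeriv_eq_norm_iteratedDeriv]
      have e2 := norm_iteratedFDeriv_mul_le (𝕜 := ℝ) hf₁ hg₁ t (le_refl (m : WithTop ℕ∞))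
      -- bound on iterated derivatives of the first factor
      have hFnorm : ∀ i : ℕ, i ≤ m →
          ‖iteratedFDeriv ℝ i (fun t : ℝ =>
            2 * Real.pi * Complex.I * (ε : ℂ) * ((W.w y : ℂ))⁻¹ * (W.w (t + y) : ℂ)) t‖
          ≤ 2 * Real.pi * ε * (Dk i * C * W.w t) := by
        intro i hi
        have hin : i ≤ n - 1 := by omega
        have hhi : ContDiff ℝ (i : ℕ) fun t : ℝ => ((W.w (t + y) : ℝ) : ℂ) :=
          hwshift.of_le (by exact_mod_cast hi)
        have heq : (fun t : ℝ =>
            2 * Real.pi * Complex.I * (ε : ℂ) * ((W.w y : ℂ))⁻¹ * (W.w (t + y) : ℂ))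
            = fun t : ℝ => (2 * Real.pi * Complex.I * (ε : ℂ) * ((W.w y : ℂ))⁻¹)
              • ((W.w (t + y) : ℝ) : ℂ) := by
          funext u; simp [smul_eq_mul]
        rw [heq, iteratedFDeriv_const_smul_apply' hhi.contDiffAt,
          norm_smul (2 * Real.pi * Complex.I * (ε : ℂ) * ((W.w y : ℂ))⁻¹)
            (iteratedFDeriv ℝ i (fun t : ℝ => ((W.w (t + y) : ℝ) : ℂ)) t),
          norm_expFun_const W hε y,
          norm_iteratedFDeriv_wshift W (hw.of_le (by exact_mod_cast hin)) le_rfl y t]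
        have h2 : |iteratedDeriv i W.w (t + y)| ≤ Dk i * (C * W.w t * W.w y) :=
          (hder i hin (t + y)).trans
            (mul_le_mul_of_nonneg_left (hwsub t y) (hDkpos i hin).le)
        have hwy := W.w_pos y
        calc 2 * Real.pi * ε * (W.w y)⁻¹ * |iteratedDeriv i W.w (t + y)|
            ≤ 2 * Real.pi * ε * (W.w y)⁻¹ * (Dk i * (C * W.w t * W.w y)) := by
              have : (0:ℝ) ≤ 2 * Real.pi * ε * (W.w y)⁻¹ := by positivity
              exact mul_le_mul_of_nonneg_left h2 this
          _ = 2 * Real.pi * ε * (Dk i * C * W.w t) := by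
              field_simp
      have hsum : ∀ i ∈ Finset.range (m + 1),
          (m.choose i : ℝ) * ‖iteratedFDeriv ℝ i (fun t : ℝ =>
              2 * Real.pi * Complex.I * (ε : ℂ) * ((W.w y : ℂ))⁻¹ * (W.w (t + y) : ℂ)) t‖
            * ‖iteratedFDeriv ℝ (m - i) (expFun W y ε) t‖
          ≤ ((m.choose i : ℝ) * (2 * Real.pi * Dk i * C) * max K 1)
              * (ε * (1 + ε) ^ (m + 1) * Sfun W (m + 1) t) := by
        intro i hi
        rw [Finset.mem_range] at hi
        have hi' : i ≤ m := by omega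
        have hin : i ≤ n - 1 := by omega
        have hDki := hDkpos i hin
        have hwt := W.w_pos t
        have hf := hFnorm i hi'
        have hKmax : (0:ℝ) ≤ max K 1 := le_trans zero_le_one (le_max_right _ _)
        by_cases him : m - i = 0
        · rw [him, norm_iteratedFDeriv_zero, expFun_norm, mul_one]
          have h5 : 2 * Real.pi * ε * (Dk i * C * W.w t)
              ≤ (2 * Real.pi * Dk i * C) * max K 1 * (ε * (1 + ε) ^ (m + 1) * Sfun W (m + 1) t) := by
            calc 2 * Real.pi * ε * (Dk i * C * W.w t)
                = (2 * Real.pi * Dk i * C) * 1 * (ε * (1 * W.w t)) := by ring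
              _ ≤ (2 * Real.pi * Dk i * C) * max K 1
                  * (ε * ((1 + ε) ^ (m + 1) * Sfun W (m + 1) t)) := by
                  have hA : (0:ℝ) ≤ 2 * Real.pi * Dk i * C :=
                    mul_nonneg (mul_nonneg (by positivity) hDki.le) hC.le
                  refine mul_le_mul (mul_le_mul_of_nonneg_left (le_max_right K 1) hA)
                    (mul_le_mul_of_nonneg_left ?_ hε) ?_ ?_
                  · exact mul_le_mul (one_le_pow₀ h1ε) (Sfun_le W (by omega) t)
                      hwt.le (by positivity)
                  · have := hwt.le; nlinarith [hε]
                  · exact mul_nonneg hA hKmax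
              _ = (2 * Real.pi * Dk i * C) * max K 1
                  * (ε * (1 + ε) ^ (m + 1) * Sfun W (m + 1) t) := by ring
          calc (m.choose i : ℝ) * ‖iteratedFDeriv ℝ i (fun t : ℝ =>
                2 * Real.pi * Complex.I * (ε : ℂ) * ((W.w y : ℂ))⁻¹ * (W.w (t + y) : ℂ)) t‖
              ≤ (m.choose i : ℝ) * (2 * Real.pi * ε * (Dk i * C * W.w t)) :=
                mul_le_mul_of_nonneg_left hf (Nat.cast_nonneg _)
            _ ≤ (m.choose i : ℝ) * ((2 * Real.pi * Dk i * C) * max K 1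
                * (ε * (1 + ε) ^ (m + 1) * Sfun W (m + 1) t)) :=
                mul_le_mul_of_nonneg_left h5 (Nat.cast_nonneg _)
            _ = ((m.choose i : ℝ) * (2 * Real.pi * Dk i * C) * max K 1)
                * (ε * (1 + ε) ^ (m + 1) * Sfun W (m + 1) t) := by ring
        · have hg := hK (m - i) (by omega) (by omega) ε hε y t
          have h2 : ε * (1 + ε) ^ (m - i) ≤ (1 + ε) ^ (m + 1) := by
            calc ε * (1 + ε) ^ (m - i) ≤ (1 + ε) * (1 + ε) ^ (m - i) :=
                  mul_le_mul_of_nonneg_right (by linarith) (by positivity)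
              _ = (1 + ε) ^ (m - i + 1) := (pow_succ' _ _).symm
              _ ≤ (1 + ε) ^ (m + 1) := pow_le_pow_right₀ h1ε (by omega)
          have h3 : W.w t * Sfun W (m - i) t ≤ Sfun W (m + 1) t :=
            (Sfun_mul W (m - i) t).trans (Sfun_mono W (by omega) t)
          calc (m.choose i : ℝ) * ‖iteratedFDeriv ℝ i (fun t : ℝ =>
                2 * Real.pi * Complex.I * (ε : ℂ) * ((W.w y : ℂ))⁻¹ * (W.w (t + y) : ℂ)) t‖
                * ‖iteratedFDeriv ℝ (m - i) (expFun W y ε) t‖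
              ≤ ((m.choose i : ℝ) * (2 * Real.pi * ε * (Dk i * C * W.w t)))
                * (K * (ε * (1 + ε) ^ (m - i)) * Sfun W (m - i) t) := by
                have h6 : (0:ℝ) ≤ 2 * Real.pi * ε * (Dk i * C * W.w t) :=
                  mul_nonneg (by positivity) (mul_nonneg (mul_nonneg hDki.le hC.le) hwt.le)
                exact mul_le_mul (mul_le_mul_of_nonneg_left hf (Nat.cast_nonneg _)) hg
                  (norm_nonneg _) (mul_nonneg (Nat.cast_nonneg _) h6)
            _ = ((m.choose i : ℝ) * (2 * Real.pi * Dk i * C) * K)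
                * ((ε * (ε * (1 + ε) ^ (m - i))) * (W.w t * Sfun W (m - i) t)) := by ring
            _ ≤ ((m.choose i : ℝ) * (2 * Real.pi * Dk i * C) * max K 1)
                * ((ε * (1 + ε) ^ (m + 1)) * Sfun W (m + 1) t) := by
                have hB : (0:ℝ) ≤ (m.choose i : ℝ) * (2 * Real.pi * Dk i * C) :=
                  mul_nonneg (Nat.cast_nonneg _)
                    (mul_nonneg (mul_nonneg (by positivity) hDki.le) hC.le)
                refine mul_le_mul (mul_le_mul_of_nonneg_left (le_max_left K 1) hB)
                  (mul_le_mul (mul_le_mul_of_nonneg_left h2 hε) h3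
                    (mul_nonneg hwt.le (Sfun_nonneg W _ t)) (by positivity)) ?_
                  (mul_nonneg hB hKmax)
                exact mul_nonneg (mul_nonneg hε (by positivity))
                  (mul_nonneg hwt.le (Sfun_nonneg W _ t))
            _ = ((m.choose i : ℝ) * (2 * Real.pi * Dk i * C) * max K 1)
                * (ε * (1 + ε) ^ (m + 1) * Sfun W (m + 1) t) := by ring
      calc ‖iteratedFDeriv ℝ (m + 1) (expFun W y ε) t‖
          = ‖iteratedFDeriv ℝ m (fun t =>
              (2 * Real.pi * Complex.I * (ε : ℂ) * ((W.w y : ℂ))⁻¹ * (W.w (t + y) : ℂ))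
              * expFun W y ε t) t‖ := e1
        _ ≤ ∑ i ∈ Finset.range (m + 1), (m.choose i : ℝ)
              * ‖iteratedFDeriv ℝ i (fun t : ℝ =>
                  2 * Real.pi * Complex.I * (ε : ℂ) * ((W.w y : ℂ))⁻¹ * (W.w (t + y) : ℂ)) t‖
              * ‖iteratedFDeriv ℝ (m - i) (expFun W y ε) t‖ := e2
        _ ≤ ∑ i ∈ Finset.range (m + 1), ((m.choose i : ℝ) * (2 * Real.pi * Dk i * C) * max K 1)
              * (ε * (1 + ε) ^ (m + 1) * Sfun W (m + 1) t) := Finset.sum_le_sum hsum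
        _ = K1 * (ε * (1 + ε) ^ (m + 1) * Sfun W (m + 1) t) := by
            rw [hK1def, Finset.sum_mul]
        _ = K1 * (ε * (1 + ε) ^ (m + 1)) * Sfun W (m + 1) t := by ring
        _ ≤ max K K1 * (ε * (1 + ε) ^ (m + 1)) * Sfun W (m + 1) t := by
            apply mul_le_mul_of_nonneg_right (mul_le_mul_of_nonneg_right (le_max_right _ _)
              (by positivity)) (Sfun_nonneg W (m + 1) t)
lemma Finv_sub_bound (W : Warping) (hwc : Continuous W.w)
    (C : ℝ) (hwsub : ∀ x y : ℝ, W.w (x + y) ≤ C * W.w x * W.w y) (y t : ℝ) :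
    |W.Finv (t + y) - W.Finv y| ≤ C * W.w y * (W.Finv |t| - W.Finv (-|t|)) := by
  have hshift : Continuous fun u : ℝ => W.w (u + y) :=
    hwc.comp (continuous_id.add continuous_const)
  have hFTC : ∀ a b : ℝ, ∫ u in a..b, W.w (u + y) = W.Finv (b + y) - W.Finv (a + y) := by
    intro a b
    apply intervalIntegral.integral_eq_sub_of_hasDerivAt
    · intro x _
      simpa [Function.comp_def] using (W.w_hasDeriv (x + y)).comp x ((hasDerivAt_id x).add_const y)
    · exact hshift.intervalIntegrable a b
  have hFTC0 : ∫ u in (-|t|)..(|t|), W.w u = W.Finv |t| - W.Finv (-|t|) := by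
    apply intervalIntegral.integral_eq_sub_of_hasDerivAt
    · intro x _; exact W.w_hasDeriv x
    · exact hwc.intervalIntegrable _ _
  have h1 : W.Finv (t + y) - W.Finv y = ∫ u in (0:ℝ)..t, W.w (u + y) := by
    rw [hFTC 0 t, zero_add]
  have habs : |∫ u in (0:ℝ)..t, W.w (u + y)| ≤ ∫ u in (-|t|)..(|t|), W.w (u + y) := by
    rcases le_total 0 t with ht | ht
    · rw [abs_of_nonneg ht,
        abs_of_nonneg (intervalIntegral.integral_nonneg ht fun u _ => (W.w_pos _).le)]
      have hsplit : ∫ u in (-t)..t, W.w (u + y)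
          = (∫ u in (-t)..(0:ℝ), W.w (u + y)) + ∫ u in (0:ℝ)..t, W.w (u + y) :=
        (intervalIntegral.integral_add_adjacent_intervals (hshift.intervalIntegrable _ _)
          (hshift.intervalIntegrable _ _)).symm
      have h0 : 0 ≤ ∫ u in (-t)..(0:ℝ), W.w (u + y) :=
        intervalIntegral.integral_nonneg (by linarith) fun u _ => (W.w_pos _).le
      linarith
    · rw [abs_of_nonpos ht, neg_neg]
      have hsym : ∫ u in (0:ℝ)..t, W.w (u + y) = -∫ u in t..(0:ℝ), W.w (u + y) :=
        intervalIntegral.integral_symm t 0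
      rw [hsym, abs_neg,
        abs_of_nonneg (intervalIntegral.integral_nonneg ht fun u _ => (W.w_pos _).le)]
      have hsplit : ∫ u in t..(-t), W.w (u + y)
          = (∫ u in t..(0:ℝ), W.w (u + y)) + ∫ u in (0:ℝ)..(-t), W.w (u + y) :=
        (intervalIntegral.integral_add_adjacent_intervals (hshift.intervalIntegrable _ _)
          (hshift.intervalIntegrable _ _)).symm
      have h0 : 0 ≤ ∫ u in (0:ℝ)..(-t), W.w (u + y) :=
        intervalIntegral.integral_nonneg (by linarith) fun u _ => (W.w_pos _).le
      linarith
  have h2 : ∫ u in (-|t|)..(|t|), W.w (u + y) ≤ ∫ u in (-|t|)..(|t|), C * W.w y * W.w u := by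
    apply intervalIntegral.integral_mono_on (by linarith [abs_nonneg t])
      (hshift.intervalIntegrable _ _)
      ((continuous_const.mul hwc).intervalIntegrable _ _)
    intro x _
    calc W.w (x + y) ≤ C * W.w x * W.w y := hwsub x y
      _ = C * W.w y * W.w x := by ring
  have h3 : ∫ u in (-|t|)..(|t|), C * W.w y * W.w u
      = C * W.w y * (W.Finv |t| - W.Finv (-|t|)) := by
    rw [intervalIntegral.integral_const_mul, hFTC0]
  rw [h1]
  exact habs.trans (h2.trans_eq h3)

lemma one_sub_expFun_bound (W : Warping) (hwc : Continuous W.w)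
    (C : ℝ) (hC : 0 < C) (hwsub : ∀ x y : ℝ, W.w (x + y) ≤ C * W.w x * W.w y)
    {ε : ℝ} (hε : 0 ≤ ε) (y t : ℝ) :
    ‖1 - expFun W y ε t‖
      ≤ min 2 (4 * Real.pi * ε * (C * (W.Finv |t| - W.Finv (-|t|)))) := by
  set ψ : ℝ := (W.Finv (t + y) - W.Finv y) / W.w y with hψdef
  have hz : ‖Complex.exp (2 * Real.pi * Complex.I * (ε : ℂ) * (ψ : ℂ))‖ ≤ 1 :=
    (expFun_norm W y ε t).le
  have h2 := one_sub_exp_bound hz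
  refine h2.trans (min_le_min le_rfl ?_)
  have hznorm : ‖(2 * Real.pi * Complex.I * (ε : ℂ) * (ψ : ℂ))‖ = 2 * Real.pi * ε * |ψ| := by
    rw [norm_mul, norm_mul, norm_mul, norm_mul]
    simp only [Complex.norm_real, Complex.norm_I, Real.norm_eq_abs, Complex.norm_ofNat]
    rw [abs_of_nonneg Real.pi_pos.le, abs_of_nonneg hε]
    ring
  rw [hznorm]
  have hψb : |ψ| ≤ C * (W.Finv |t| - W.Finv (-|t|)) := by
    rw [hψdef, abs_div, abs_of_pos (W.w_pos y), div_le_iff₀ (W.w_pos y)]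
    calc |W.Finv (t + y) - W.Finv y| ≤ C * W.w y * (W.Finv |t| - W.Finv (-|t|)) :=
        Finv_sub_bound W hwc C hwsub y t
      _ = C * (W.Finv |t| - W.Finv (-|t|)) * W.w y := by ring
  calc 2 * (2 * Real.pi * ε * |ψ|) ≤ 2 * (2 * Real.pi * ε * (C * (W.Finv |t| - W.Finv (-|t|)))) := by
        have : (0:ℝ) ≤ 2 * Real.pi * ε := by positivity
        nlinarith [hψb]
    _ = 4 * Real.pi * ε * (C * (W.Finv |t| - W.Finv (-|t|))) := by ring
/-- Let `1 ≤ p < ∞`, `w̃` a continuous positive weight, `X = L^p_{w̃}(ℝ)`.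
Let `F : D → ℝ` be a warping function with `w = (F⁻¹)' ∈ C^{n−1}(ℝ)`, `w(x+y) ≤ C w(x) w(y)`
and `|w^{(k)}/w| ≤ D_k` for `k = 0,…,n−1`.  If `θ ∈ Cⁿ(ℝ) ∩ L²_{√w}(ℝ)` satisfies
`θ^{(n)} ∈ X` and `θ^{(k)} w^l ∈ X` for all `0 ≤ k ≤ n−1`, `1 ≤ l ≤ n−k`, then
`(E_{y,ε}θ)^{(n)} ∈ X` for all `y ∈ ℝ`, `ε ≥ 0`, and
`sup_{y∈ℝ} ‖(θ − E_{y,ε}θ)^{(n)}‖_X → 0` as `ε → 0⁺`. -/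
theorem Eop_deriv_tendsto_zero
    (p : ℝ≥0∞) (hp : 1 ≤ p) (hp' : p ≠ ⊤)
    (wt : ℝ → ℝ) (hwt : Continuous wt) (hwtpos : ∀ t, 0 < wt t)
    (W : Warping) (n : ℕ) (hn : 1 ≤ n)
    (hw : ContDiff ℝ (n - 1 : ℕ) W.w)
    (C : ℝ) (hwsub : ∀ x y : ℝ, W.w (x + y) ≤ C * W.w x * W.w y)
    (Dk : ℕ → ℝ) (hDkpos : ∀ k ≤ n - 1, 0 < Dk k)
    (hder : ∀ k ≤ n - 1, ∀ s : ℝ, |iteratedDeriv k W.w s| ≤ Dk k * W.w s)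
    (θ : ℝ → ℂ) (hθ : ContDiff ℝ n θ)
    (hθw : MemLp (fun s : ℝ => Real.sqrt (W.w s) • θ s) 2 volume)
    (hθn : MemLp (fun s : ℝ => wt s • iteratedDeriv n θ s) p volume)
    (hθkl : ∀ k ≤ n - 1, ∀ l : ℕ, 1 ≤ l → l ≤ n - k →
      MemLp (fun s : ℝ => (wt s * W.w s ^ l) • iteratedDeriv k θ s) p volume) :
    (∀ y ε : ℝ, 0 ≤ ε →
      MemLp (fun t : ℝ => wt t • iteratedDeriv n (Eop W y ε θ) t) p volume) ∧
    Tendsto (fun ε : ℝ =>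
        ⨆ y : ℝ, eLpNorm
          (fun t : ℝ => wt t • iteratedDeriv n (fun u : ℝ => θ u - Eop W y ε θ u) t) p volume)
      (nhdsWithin 0 (Set.Ioi 0)) (nhds 0) := by
  have hwc : Continuous W.w := hw.continuous
  have hC : 0 < C := by
    have h00 := hwsub 0 0
    rw [add_zero] at h00
    by_contra h
    push_neg at h
    have h1 : C * W.w 0 ≤ 0 := mul_nonpos_of_nonpos_of_nonneg h (W.w_pos 0).le
    have h2 : C * W.w 0 * W.w 0 ≤ 0 := mul_nonpos_of_nonpos_of_nonneg h1 (W.w_pos 0).le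
    linarith [W.w_pos 0]
  have hFinv : ContDiff ℝ (n : ℕ) W.Finv := Finv_contDiff W n hn hw
  obtain ⟨K, hK0, hK⟩ := expFun_bound W n hw hFinv C hC hwsub Dk hDkpos hder
  have hEop : ∀ y ε : ℝ, Eop W y ε θ = fun t => θ t * expFun W y ε t := fun y ε => rfl
  have hθcont : ∀ k : ℕ, k ≤ n → Continuous (iteratedDeriv k θ) :=
    fun k hk => hθ.continuous_iteratedDeriv k (by exact_mod_cast hk)
  have hScont : ∀ m : ℕ, Continuous (Sfun W m) := by
    intro m
    unfold Sfun
    exact continuous_finset_sum _ fun l _ => hwc.pow _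
  -- basic MemLp blocks
  have hSwD : ∀ k : ℕ, k < n → ∀ m : ℕ, 1 ≤ m → m ≤ n - k →
      MemLp (fun t : ℝ => wt t * (Sfun W m t * ‖iteratedDeriv k θ t‖)) p volume := by
    intro k hkn m hm1 hmnk
    have heq : (fun t : ℝ => wt t * (Sfun W m t * ‖iteratedDeriv k θ t‖))
        = fun t : ℝ => ∑ l ∈ Finset.range m,
            ‖(wt t * W.w t ^ (l + 1)) • iteratedDeriv k θ t‖ := by
      funext t
      rw [Sfun, Finset.sum_mul, Finset.mul_sum]
      refine Finset.sum_congr rfl fun l _ => ?_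
      rw [norm_smul, Real.norm_eq_abs,
        abs_of_pos (mul_pos (hwtpos t) (pow_pos (W.w_pos t) _))]
      ring
    rw [heq]
    refine memLp_finset_sum _ fun l hl => ?_
    rw [Finset.mem_range] at hl
    exact (hθkl k (by omega) (l + 1) (by omega) (by omega)).norm
  have hθnnorm : MemLp (fun t : ℝ => wt t * ‖iteratedDeriv n θ t‖) p volume := by
    have h2 := hθn.norm
    have heq : (fun t : ℝ => ‖wt t • iteratedDeriv n θ t‖)
        = fun t : ℝ => wt t * ‖iteratedDeriv n θ t‖ := by
      funext t
      rw [norm_smul, Real.norm_eq_abs, abs_of_pos (hwtpos t)]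
    rwa [heq] at h2
  constructor
  · -- Part 1 : MemLp
    intro y ε hε
    have hecd : ContDiff ℝ (n : ℕ) (expFun W y ε) := expFun_contDiff W hFinv y ε
    have hEc : ContDiff ℝ (n : ℕ) (Eop W y ε θ) := by
      rw [hEop]; exact hθ.mul hecd
    have hmeas : AEStronglyMeasurable
        (fun t : ℝ => wt t • iteratedDeriv n (Eop W y ε θ) t) volume :=
      (hwt.smul (hEc.continuous_iteratedDeriv n le_rfl)).aestronglyMeasurable
    set g : ℝ → ℝ := fun t => wt t * ‖iteratedDeriv n θ t‖
      + ∑ k ∈ Finset.range n, ((n.choose k : ℝ) * (K * (ε * (1 + ε) ^ (n - k))))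
          * (wt t * (Sfun W (n - k) t * ‖iteratedDeriv k θ t‖)) with hgdef
    have hgmem : MemLp g p volume := by
      refine hθnnorm.add (memLp_finset_sum _ fun k hk => ?_)
      rw [Finset.mem_range] at hk
      exact (hSwD k hk (n - k) (by omega) le_rfl).const_mul _
    refine MemLp.of_le hgmem hmeas (Filter.Eventually.of_forall fun t => ?_)
    have hb : ‖iteratedDeriv n (Eop W y ε θ) t‖ ≤ ‖iteratedDeriv n θ t‖
        + ∑ k ∈ Finset.range n, ((n.choose k : ℝ) * (K * (ε * (1 + ε) ^ (n - k))))
            * (Sfun W (n - k) t * ‖iteratedDeriv k θ t‖) := by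
      rw [← norm_iteratedFDeriv_eq_norm_iteratedDeriv, hEop]
      refine (norm_iteratedFDeriv_mul_le hθ hecd t le_rfl).trans ?_
      rw [Finset.sum_range_succ, Nat.choose_self, Nat.sub_self, norm_iteratedFDeriv_zero,
        expFun_norm, Nat.cast_one, one_mul, mul_one, norm_iteratedFDeriv_eq_norm_iteratedDeriv]
      rw [add_comm]
      refine add_le_add_right (Finset.sum_le_sum fun i hi => ?_) _
      rw [Finset.mem_range] at hi
      have h1 := hK (n - i) (by omega) (by omega) ε hε y t
      rw [norm_iteratedFDeriv_eq_norm_iteratedDeriv (n := i)]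
      calc (n.choose i : ℝ) * ‖iteratedDeriv i θ t‖
            * ‖iteratedFDeriv ℝ (n - i) (expFun W y ε) t‖
          ≤ (n.choose i : ℝ) * ‖iteratedDeriv i θ t‖
            * (K * (ε * (1 + ε) ^ (n - i)) * Sfun W (n - i) t) := by
            refine mul_le_mul_of_nonneg_left h1 (by positivity)
        _ = ((n.choose i : ℝ) * (K * (ε * (1 + ε) ^ (n - i))))
            * (Sfun W (n - i) t * ‖iteratedDeriv i θ t‖) := by ring
    have hnorm : ‖wt t • iteratedDeriv n (Eop W y ε θ) t‖
        = wt t * ‖iteratedDeriv n (Eop W y ε θ) t‖ := by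
      rw [norm_smul, Real.norm_eq_abs, abs_of_pos (hwtpos t)]
    rw [hnorm, Real.norm_eq_abs]
    refine le_trans ?_ (le_abs_self _)
    have h2 := mul_le_mul_of_nonneg_left hb (hwtpos t).le
    refine h2.trans_eq ?_
    rw [hgdef, mul_add, Finset.mul_sum]
    congr 1
    exact Finset.sum_congr rfl fun k _ => by ring
  · -- Part 2 : convergence
    have hpne : p ≠ 0 := (lt_of_lt_of_le zero_lt_one hp).ne'
    have hq : 0 < p.toReal := ENNReal.toReal_pos hpne hp'
    have hFc : Continuous W.Finv :=
      (Differentiable.continuous fun s => (W.w_hasDeriv s).differentiableAt)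
    set Φ : ℝ → ℝ := fun t => C * (W.Finv |t| - W.Finv (-|t|)) with hΦdef
    have hΦcont : Continuous Φ :=
      continuous_const.mul ((hFc.comp continuous_abs).sub (hFc.comp continuous_abs.neg))
    have hΦ0 : ∀ t, 0 ≤ Φ t := by
      intro t
      have h1 := (abs_nonneg (W.Finv (t + 0) - W.Finv 0)).trans
        (Finv_sub_bound W hwc C hwsub 0 t)
      have h2 := W.w_pos 0
      have h3 : 0 ≤ W.Finv |t| - W.Finv (-|t|) := by
        by_contra hcon
        push_neg at hcon
        have h4 := mul_pos hC h2
        nlinarith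
      simp only [hΦdef]
      positivity
    set G2 : ℝ → ℝ → ℝ := fun ε t =>
      (wt t * ‖iteratedDeriv n θ t‖) * min 2 (4 * Real.pi * ε * Φ t) with hG2def
    set G1 : ℝ → ℝ → ℝ := fun ε t => ∑ k ∈ Finset.range n,
      ((n.choose k : ℝ) * (K * (ε * (1 + ε) ^ (n - k))))
        * (wt t * (Sfun W (n - k) t * ‖iteratedDeriv k θ t‖)) with hG1def
    have hG1cont : ∀ ε, Continuous (G1 ε) := fun ε =>
      continuous_finset_sum _ fun k hk => continuous_const.mul
        (hwt.mul ((hScont _).mul (hθcont k (by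
          rw [Finset.mem_range] at hk; omega)).norm))
    have hG2cont : ∀ ε, Continuous (G2 ε) :=
      fun ε => (hwt.mul (hθcont n le_rfl).norm).mul
        (continuous_const.min (continuous_const.mul hΦcont))
    have hG1nonneg : ∀ ε : ℝ, 0 ≤ ε → ∀ t, 0 ≤ G1 ε t := by
      intro ε hε t
      refine Finset.sum_nonneg fun k _ => ?_
      exact mul_nonneg (mul_nonneg (Nat.cast_nonneg _) (mul_nonneg hK0 (by positivity)))
        (mul_nonneg (hwtpos t).le (mul_nonneg (Sfun_nonneg W _ t) (norm_nonneg _)))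
    have hminnn : ∀ ε : ℝ, 0 ≤ ε → ∀ t, 0 ≤ min 2 (4 * Real.pi * ε * Φ t) := fun ε hε t =>
      le_min (by norm_num) (mul_nonneg (by positivity) (hΦ0 t))
    have hG2nonneg : ∀ ε : ℝ, 0 ≤ ε → ∀ t, 0 ≤ G2 ε t := fun ε hε t =>
      mul_nonneg (mul_nonneg (hwtpos t).le (norm_nonneg _)) (hminnn ε hε t)
    -- pointwise bound
    have hptw : ∀ ε : ℝ, 0 ≤ ε → ∀ y t : ℝ,
        ‖wt t • iteratedDeriv n (fun u => θ u - Eop W y ε θ u) t‖ ≤ G1 ε t + G2 ε t := by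
      intro ε hε y t
      have hecd : ContDiff ℝ (n : ℕ) (expFun W y ε) := expFun_contDiff W hFinv y ε
      have hfe : (fun u => θ u - Eop W y ε θ u) = fun u => θ u * (1 - expFun W y ε u) := by
        funext u
        show θ u - θ u * expFun W y ε u = _
        ring
      rw [hfe, norm_smul, Real.norm_eq_abs, abs_of_pos (hwtpos t),
        ← norm_iteratedFDeriv_eq_norm_iteratedDeriv]
      have h1sub : ContDiff ℝ (n : ℕ) fun u => 1 - expFun W y ε u := contDiff_const.sub hecd
      have hmul := norm_iteratedFDeriv_mul_le hθ h1sub t le_rfl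
      have hlast : ‖iteratedFDeriv ℝ 0 (fun u => 1 - expFun W y ε u) t‖
          ≤ min 2 (4 * Real.pi * ε * Φ t) := by
        rw [norm_iteratedFDeriv_zero]
        exact one_sub_expFun_bound W hwc C hC hwsub hε y t
      have hterm : ∀ i ∈ Finset.range n,
          (n.choose i : ℝ) * ‖iteratedFDeriv ℝ i θ t‖
            * ‖iteratedFDeriv ℝ (n - i) (fun u => 1 - expFun W y ε u) t‖
          ≤ ((n.choose i : ℝ) * (K * (ε * (1 + ε) ^ (n - i))))
            * (Sfun W (n - i) t * ‖iteratedDeriv i θ t‖) := by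
        intro i hi
        rw [Finset.mem_range] at hi
        have heq : ‖iteratedFDeriv ℝ (n - i) (fun u => 1 - expFun W y ε u) t‖
            = ‖iteratedFDeriv ℝ (n - i) (expFun W y ε) t‖ := by
          rw [norm_iteratedFDeriv_eq_norm_iteratedDeriv,
            norm_iteratedDeriv_one_sub (by omega) _ t,
            ← norm_iteratedFDeriv_eq_norm_iteratedDeriv]
        rw [heq, norm_iteratedFDeriv_eq_norm_iteratedDeriv (n := i)]
        have h1 := hK (n - i) (by omega) (by omega) ε hε y t
        calc (n.choose i : ℝ) * ‖iteratedDeriv i θ t‖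
              * ‖iteratedFDeriv ℝ (n - i) (expFun W y ε) t‖
            ≤ (n.choose i : ℝ) * ‖iteratedDeriv i θ t‖
              * (K * (ε * (1 + ε) ^ (n - i)) * Sfun W (n - i) t) :=
              mul_le_mul_of_nonneg_left h1 (by positivity)
          _ = ((n.choose i : ℝ) * (K * (ε * (1 + ε) ^ (n - i))))
              * (Sfun W (n - i) t * ‖iteratedDeriv i θ t‖) := by ring
      have hsum : ‖iteratedFDeriv ℝ n (fun u => θ u * (1 - expFun W y ε u)) t‖
          ≤ (∑ i ∈ Finset.range n, ((n.choose i : ℝ) * (K * (ε * (1 + ε) ^ (n - i))))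
              * (Sfun W (n - i) t * ‖iteratedDeriv i θ t‖))
            + ‖iteratedDeriv n θ t‖ * min 2 (4 * Real.pi * ε * Φ t) := by
        refine hmul.trans ?_
        rw [Finset.sum_range_succ, Nat.choose_self, Nat.cast_one, one_mul, Nat.sub_self]
        refine add_le_add (Finset.sum_le_sum hterm) ?_
        rw [norm_iteratedFDeriv_eq_norm_iteratedDeriv (n := n)]
        exact mul_le_mul_of_nonneg_left hlast (norm_nonneg _)
      refine (mul_le_mul_of_nonneg_left hsum (hwtpos t).le).trans_eq ?_
      simp only [hG1def, hG2def]
      rw [mul_add, Finset.mul_sum]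
      congr 1
      · exact Finset.sum_congr rfl fun k _ => by ring
      · ring
    have hmeasf : ∀ ε y : ℝ, AEStronglyMeasurable
        (fun t : ℝ => wt t • iteratedDeriv n (fun u => θ u - Eop W y ε θ u) t) volume := by
      intro ε y
      have hecd : ContDiff ℝ (n : ℕ) (expFun W y ε) := expFun_contDiff W hFinv y ε
      have hc : ContDiff ℝ (n : ℕ) fun u => θ u - Eop W y ε θ u := hθ.sub (hθ.mul hecd)
      exact (hwt.smul (hc.continuous_iteratedDeriv n le_rfl)).aestronglyMeasurable
    have hsuple : ∀ ε : ℝ, 0 ≤ ε →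
        (⨆ y : ℝ, eLpNorm
            (fun t : ℝ => wt t • iteratedDeriv n (fun u => θ u - Eop W y ε θ u) t) p volume)
          ≤ eLpNorm (fun t => G1 ε t + G2 ε t) p volume :=
      fun ε hε => iSup_le fun y => eLpNorm_mono_real fun t => hptw ε hε y t
    set H1 : ℝ → ℝ := fun t => ∑ k ∈ Finset.range n,
      ((n.choose k : ℝ) * (K * 2 ^ (n - k)))
        * (wt t * (Sfun W (n - k) t * ‖iteratedDeriv k θ t‖)) with hH1def
    have hH1mem : MemLp H1 p volume := by
      refine memLp_finset_sum _ fun k hk => ?_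
      rw [Finset.mem_range] at hk
      exact (hSwD k hk (n - k) (by omega) le_rfl).const_mul _
    have hG1le : ∀ ε : ℝ, 0 < ε → ε ≤ 1 →
        eLpNorm (G1 ε) p volume ≤ ENNReal.ofReal ε * eLpNorm H1 p volume := by
      intro ε hε hε1
      have hpt : ∀ t, ‖G1 ε t‖ ≤ (ε • H1) t := by
        intro t
        rw [Real.norm_eq_abs, abs_of_nonneg (hG1nonneg ε hε.le t)]
        simp only [hG1def, hH1def, Pi.smul_apply, smul_eq_mul]
        rw [Finset.mul_sum]
        refine Finset.sum_le_sum fun k _ => ?_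
        have hpow : (1 + ε) ^ (n - k) ≤ 2 ^ (n - k) :=
          pow_le_pow_left₀ (by linarith) (by linarith) _
        have hBnn : 0 ≤ wt t * (Sfun W (n - k) t * ‖iteratedDeriv k θ t‖) :=
          mul_nonneg (hwtpos t).le (mul_nonneg (Sfun_nonneg W _ t) (norm_nonneg _))
        calc ((n.choose k : ℝ) * (K * (ε * (1 + ε) ^ (n - k))))
              * (wt t * (Sfun W (n - k) t * ‖iteratedDeriv k θ t‖))
            ≤ ((n.choose k : ℝ) * (K * (ε * 2 ^ (n - k))))
              * (wt t * (Sfun W (n - k) t * ‖iteratedDeriv k θ t‖)) := by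
              refine mul_le_mul_of_nonneg_right (mul_le_mul_of_nonneg_left
                (mul_le_mul_of_nonneg_left (mul_le_mul_of_nonneg_left hpow hε.le) hK0)
                (Nat.cast_nonneg _)) hBnn
          _ = ε * (((n.choose k : ℝ) * (K * 2 ^ (n - k)))
              * (wt t * (Sfun W (n - k) t * ‖iteratedDeriv k θ t‖))) := by ring
      calc eLpNorm (G1 ε) p volume ≤ eLpNorm (ε • H1) p volume := eLpNorm_mono_real hpt
        _ = ‖ε‖ₑ * eLpNorm H1 p volume := eLpNorm_const_smul ε H1 p volume
        _ = ENNReal.ofReal ε * eLpNorm H1 p volume := by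
            rw [← ofReal_norm, Real.norm_eq_abs, abs_of_nonneg hε.le]
    -- G2 tends to zero via dominated convergence
    have hG2T : Tendsto (fun ε : ℝ => eLpNorm (G2 ε) p volume) (𝓝[>] (0:ℝ)) (𝓝 0) := by
      have hDCT : Tendsto (fun ε : ℝ => ∫⁻ t, (‖G2 ε t‖₊ : ℝ≥0∞) ^ p.toReal)
          (𝓝[>] (0:ℝ)) (𝓝 (∫⁻ _t : ℝ, 0)) := by
        refine tendsto_lintegral_filter_of_dominated_convergence
          (fun t => (‖2 * (wt t * ‖iteratedDeriv n θ t‖)‖₊ : ℝ≥0∞) ^ p.toReal)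
          (Filter.Eventually.of_forall fun ε => ?_) ?_ ?_ ?_
        · exact ((ENNReal.continuous_rpow_const.measurable).comp
            ((hG2cont ε).measurable.enorm))
        · filter_upwards [self_mem_nhdsWithin] with ε hε
          refine Filter.Eventually.of_forall fun t => ?_
          rw [Set.mem_Ioi] at hε
          refine ENNReal.rpow_le_rpow ?_ hq.le
          rw [← enorm_eq_nnnorm, ← enorm_eq_nnnorm, ← ofReal_norm, ← ofReal_norm]
          refine ENNReal.ofReal_le_ofReal ?_
          rw [Real.norm_eq_abs, Real.norm_eq_abs, abs_of_nonneg (hG2nonneg ε hε.le t)]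
          have h2 : min 2 (4 * Real.pi * ε * Φ t) ≤ 2 := min_le_left _ _
          have h3 : 0 ≤ wt t * ‖iteratedDeriv n θ t‖ :=
            mul_nonneg (hwtpos t).le (norm_nonneg _)
          calc (wt t * ‖iteratedDeriv n θ t‖) * min 2 (4 * Real.pi * ε * Φ t)
              ≤ (wt t * ‖iteratedDeriv n θ t‖) * 2 := mul_le_mul_of_nonneg_left h2 h3
            _ = 2 * (wt t * ‖iteratedDeriv n θ t‖) := by ring
            _ ≤ |2 * (wt t * ‖iteratedDeriv n θ t‖)| := le_abs_self _
        · -- finiteness of the bound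
          have hfin : ∫⁻ t, (‖(fun s : ℝ => wt s • iteratedDeriv n θ s) t‖₊ : ℝ≥0∞) ^ p.toReal
              < ⊤ := by
            exact (eLpNorm_lt_top_iff_lintegral_rpow_enorm_lt_top hpne hp').mp
              hθn.eLpNorm_lt_top
          have heq : ∀ t : ℝ, (‖2 * (wt t * ‖iteratedDeriv n θ t‖)‖₊ : ℝ≥0∞) ^ p.toReal
              = (2:ℝ≥0∞) ^ p.toReal * (‖wt t • iteratedDeriv n θ t‖₊ : ℝ≥0∞) ^ p.toReal := by
            intro t
            rw [← ENNReal.mul_rpow_of_nonneg _ _ hq.le]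
            congr 1
            rw [← enorm_eq_nnnorm, ← enorm_eq_nnnorm, ← ofReal_norm, ← ofReal_norm]
            rw [show ((2:ℝ≥0∞)) = ENNReal.ofReal (2:ℝ) by simp]
            rw [← ENNReal.ofReal_mul (by norm_num)]
            congr 1
            rw [Real.norm_eq_abs, norm_smul, Real.norm_eq_abs, abs_of_pos (hwtpos t),
              abs_of_nonneg (mul_nonneg (by norm_num)
                (mul_nonneg (hwtpos t).le (norm_nonneg _)))]
          have h2top : ((2:ℝ≥0∞)) ^ p.toReal ≠ ⊤ :=
            ENNReal.rpow_ne_top_of_nonneg hq.le (by norm_num)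
          rw [funext heq, lintegral_const_mul' _ _ h2top]
          exact ENNReal.mul_ne_top h2top hfin.ne
        · refine Filter.Eventually.of_forall fun t => ?_
          have hcont : Tendsto (fun ε : ℝ => G2 ε t) (𝓝[>] (0:ℝ)) (𝓝 0) := by
            have hc : Continuous fun ε : ℝ =>
                (wt t * ‖iteratedDeriv n θ t‖) * min 2 (4 * Real.pi * ε * Φ t) :=
              continuous_const.mul (continuous_const.min
                ((continuous_const.mul continuous_id).mul continuous_const))
            have h0 : (wt t * ‖iteratedDeriv n θ t‖) * min 2 (4 * Real.pi * 0 * Φ t) = 0 := by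
              norm_num
            have := (hc.tendsto 0).mono_left (nhdsWithin_le_nhds (s := Set.Ioi (0:ℝ)))
            rw [h0] at this
            exact this
          have hnn : Tendsto (fun ε : ℝ => (‖G2 ε t‖₊ : ℝ≥0∞)) (𝓝[>] (0:ℝ)) (𝓝 0) := by
            have h1 : Continuous fun x : ℝ => (‖x‖₊ : ℝ≥0∞) :=
              ENNReal.continuous_coe.comp continuous_nnnorm
            have := (h1.tendsto 0).comp hcont
            simpa [Function.comp_def] using this
          have := (ENNReal.continuous_rpow_const (y := p.toReal)).tendsto 0 |>.comp hnn
          simpa [Function.comp_def, ENNReal.zero_rpow_of_pos hq] using this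
      have hrepr : ∀ ε : ℝ, eLpNorm (G2 ε) p volume
          = (∫⁻ t, (‖G2 ε t‖₊ : ℝ≥0∞) ^ p.toReal) ^ (1 / p.toReal) :=
        fun ε => eLpNorm_eq_lintegral_rpow_enorm_toReal hpne hp'
      have h2 : Tendsto (fun ε : ℝ => (∫⁻ t, (‖G2 ε t‖₊ : ℝ≥0∞) ^ p.toReal) ^ (1 / p.toReal))
          (𝓝[>] (0:ℝ)) (𝓝 0) := by
        have h3 := (ENNReal.continuous_rpow_const (y := 1 / p.toReal)).tendsto
          (∫⁻ _t : ℝ, (0:ℝ≥0∞)) |>.comp hDCT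
        simpa [Function.comp_def, lintegral_zero, one_div,
          ENNReal.zero_rpow_of_pos (show (0:ℝ) < p.toReal⁻¹ by positivity)] using h3
      exact Tendsto.congr (fun ε => (hrepr ε).symm) h2
    -- assemble
    have hofReal : Tendsto (fun ε : ℝ => ENNReal.ofReal ε * eLpNorm H1 p volume)
        (𝓝[>] (0:ℝ)) (𝓝 0) := by
      have h1 : Tendsto (fun ε : ℝ => ENNReal.ofReal ε) (𝓝[>] (0:ℝ)) (𝓝 0) := by
        have := (ENNReal.continuous_ofReal.tendsto 0).mono_left
          (nhdsWithin_le_nhds (s := Set.Ioi (0:ℝ)))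
        simpa using this
      have h2 := ENNReal.Tendsto.mul_const h1
        (Or.inr hH1mem.eLpNorm_lt_top.ne)
      simpa using h2
    have hB : Tendsto (fun ε : ℝ =>
        ENNReal.ofReal ε * eLpNorm H1 p volume + eLpNorm (G2 ε) p volume)
        (𝓝[>] (0:ℝ)) (𝓝 0) := by
      have := hofReal.add hG2T
      simpa using this
    refine tendsto_of_tendsto_of_tendsto_of_le_of_le' tendsto_const_nhds hB
      (Filter.Eventually.of_forall fun ε => zero_le) ?_
    filter_upwards [Ioc_mem_nhdsGT (zero_lt_one (α := ℝ))] with ε hε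
    calc (⨆ y : ℝ, eLpNorm
          (fun t : ℝ => wt t • iteratedDeriv n (fun u : ℝ => θ u - Eop W y ε θ u) t) p volume)
        ≤ eLpNorm (fun t => G1 ε t + G2 ε t) p volume := hsuple ε hε.1.le
      _ ≤ eLpNorm (G1 ε) p volume + eLpNorm (G2 ε) p volume :=
          eLpNorm_add_le (hG1cont ε).aestronglyMeasurable (hG2cont ε).aestronglyMeasurable hp
      _ ≤ ENNReal.ofReal ε * eLpNorm H1 p volume + eLpNorm (G2 ε) p volume :=
          add_le_add_left (hG1le ε hε.1 hε.2) _
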